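/- For every integer n and every natural number k, 3·T_R^k(n) + 2 = F^k(3n + 2). That is, S ∘ T_R^k = F^k ∘ S where S(n) = 3n + 2. -/
import Mathlib


/-- The Collatz function. -/
def T (n : ℤ) : ℤ := if n % 2 = 0 then n / 2 else (3 * n + 1) / 2

/-- The map `F`, defined on integers congruent to 2 (mod 3):
`F n = T n` if `n ≡ 5 (mod 6)` and `F n = T (T n)` if `n ≡ 2 (mod 6)`. -/
def F (n : ℤ) : ℤ := if n % 6 = 5 then T n else T (T n)

/-- The refined map `T_R`. -/
def TR (n : ℤ) : ℤ :=
  if n % 4 = 0 then 3 * n / 4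
  else if n % 4 = 2 then (n - 2) / 4
  else (3 * n + 1) / 2

lemma step (n : ℤ) : 3 * TR n + 2 = F (3 * n + 2) := by
  simp only [TR, F, T]
  split_ifs <;> omega

theorem stmt_7 (n : ℤ) (k : ℕ) : 3 * TR^[k] n + 2 = F^[k] (3 * n + 2) := by
  induction k generalizing n with
  | zero => simp
  | succ k ih =>
    rw [Function.iterate_succ_apply, Function.iterate_succ_apply, ← step, ih]
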